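/- arXiv:1410.3197 — 9 statements merged into one kernel-verified Lean document; each statement's English description precedes it below -/
import Mathlib

section
/- Let B = C*DC ∈ ℂ^{n×n} with C nonsingular and D = diag(d_1,…,d_n), and define ⟨B⟩ = C*|D|C where |D| = diag(|d_1|,…,|d_n|). Then for every real t, the 2n×2n Hermitian block matrix [[⟨B⟩, e^{it}B],[e^{-it}B*, ⟨B⟩]] is positive semidefinite. -/
open Matrix
open scoped ComplexOrder

theorem stmt0 {n : ℕ} (C : Matrix (Fin n) (Fin n) ℂ) (hC : IsUnit C)
    (d : Fin n → ℂ) (B : Matrix (Fin n) (Fin n) ℂ)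
    (hB : B = Cᴴ * Matrix.diagonal d * C) (t : ℝ) :
    (Matrix.fromBlocks
      (Cᴴ * Matrix.diagonal (fun i => ((‖d i‖ : ℝ) : ℂ)) * C)
      (Complex.exp (t * Complex.I) • B)
      (Complex.exp (-(t * Complex.I)) • Bᴴ)
      (Cᴴ * Matrix.diagonal (fun i => ((‖d i‖ : ℝ) : ℂ)) * C)).PosSemidef := by
  classical
  set e : ℂ := Complex.exp (t * Complex.I) with he
  set a : Fin n → ℂ := fun i => (Real.sqrt (‖d i‖) : ℂ) with ha
  set w : Fin n → ℂ := fun i => e * (if d i = 0 then 1 else d i / (‖d i‖ : ℂ)) with hw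
  have hsa : ∀ i, star (a i) = a i := by
    intro i; simp [ha, Complex.star_def, Complex.conj_ofReal]
  have haa : ∀ i, a i * a i = (‖d i‖ : ℂ) := by
    intro i
    simp only [ha]
    rw [← Complex.ofReal_mul, Real.mul_self_sqrt (norm_nonneg _)]
  have habsw : ∀ i, (‖d i‖ : ℂ) * w i = e * d i := by
    intro i
    by_cases h : d i = 0
    · simp [hw, h]
    · have habs : (‖d i‖ : ℂ) ≠ 0 := by
        simpa using (norm_ne_zero_iff.mpr h)
      simp only [hw, h, if_false]
      field_simp
  have hww : ∀ i, star (w i) * w i = 1 := by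
    intro i
    have habs1 : ‖w i‖ = 1 := by
      by_cases h : d i = 0
      · simp [hw, h, he, Complex.norm_exp]
      · simp [hw, he, _root_.map_mul, Complex.norm_exp, map_div₀, h, norm_ne_zero_iff.mpr h]
    rw [Complex.star_def, mul_comm, Complex.mul_conj, Complex.normSq_eq_norm_sq, habs1]
    norm_num
  have hstarw : ∀ i, star (w i) * (‖d i‖ : ℂ)
      = Complex.exp (-(t * Complex.I)) * star (d i) := by
    intro i
    have hca : star ((‖d i‖ : ℂ)) = ((‖d i‖ : ℂ)) := by
      rw [Complex.star_def, Complex.conj_ofReal]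
    have h0 : star (w i) * ((‖d i‖ : ℂ)) = star ((‖d i‖ : ℂ) * w i) := by
      conv_rhs => rw [star_mul', hca]
      exact mul_comm _ _
    rw [h0, habsw, star_mul']
    congr 1
    rw [he, Complex.star_def, ← Complex.exp_conj]
    congr 1
    rw [_root_.map_mul, Complex.conj_ofReal, Complex.conj_I]
    ring
  -- helper: conjugation of diagonals by C
  have hblock : ∀ u v : Fin n → ℂ,
      (Matrix.diagonal u * C)ᴴ * (Matrix.diagonal v * C)
        = Cᴴ * Matrix.diagonal (fun i => star (u i) * v i) * C := by
    intro u v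
    rw [Matrix.conjTranspose_mul, Matrix.diagonal_conjTranspose, Matrix.mul_assoc,
      ← Matrix.mul_assoc (Matrix.diagonal (star u)), Matrix.diagonal_mul_diagonal,
      ← Matrix.mul_assoc]
    rfl
  have hsmul : ∀ (c : ℂ) (v : Fin n → ℂ),
      c • (Cᴴ * Matrix.diagonal v * C) = Cᴴ * Matrix.diagonal (fun i => c * v i) * C := by
    intro c v
    have : (fun i => c * v i) = c • v := rfl
    rw [this, Matrix.diagonal_smul, Matrix.mul_smul, Matrix.smul_mul]
  have hBH : Bᴴ = Cᴴ * Matrix.diagonal (star d) * C := by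
    rw [hB]
    simp [Matrix.conjTranspose_mul, Matrix.diagonal_conjTranspose, Matrix.mul_assoc]
  set M : Matrix (Fin n ⊕ Fin n) (Fin n ⊕ Fin n) ℂ :=
    Matrix.fromBlocks (Matrix.diagonal a * C) (Matrix.diagonal (fun i => a i * w i) * C) 0 0
    with hM
  have key : (Matrix.fromBlocks
      (Cᴴ * Matrix.diagonal (fun i => (‖d i‖ : ℂ)) * C)
      (e • B)
      (Complex.exp (-(t * Complex.I)) • Bᴴ)
      (Cᴴ * Matrix.diagonal (fun i => (‖d i‖ : ℂ)) * C)) = Mᴴ * M := by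
    have e11 : (fun i => star (a i) * a i) = (fun i => (‖d i‖ : ℂ)) :=
      funext fun i => by rw [hsa, haa]
    have e12 : (fun i => star (a i) * (a i * w i)) = (fun i => e * d i) :=
      funext fun i => by rw [hsa, ← mul_assoc, haa, habsw]
    have e21 : (fun i => star (a i * w i) * a i)
        = (fun i => Complex.exp (-(t * Complex.I)) * star d i) :=
      funext fun i => by
        rw [star_mul', hsa]
        calc a i * star (w i) * a i = star (w i) * (a i * a i) := by ring
          _ = Complex.exp (-(t * Complex.I)) * star (d i) := by rw [haa, hstarw]
    have e22 : (fun i => star (a i * w i) * (a i * w i))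
        = (fun i => (‖d i‖ : ℂ)) :=
      funext fun i => by
        rw [star_mul', hsa]
        calc a i * star (w i) * (a i * w i) = (a i * a i) * (star (w i) * w i) := by ring
          _ = (‖d i‖ : ℂ) := by rw [haa, hww, mul_one]
    rw [hM, Matrix.fromBlocks_conjTranspose, Matrix.fromBlocks_multiply]
    simp only [Matrix.conjTranspose_zero, Matrix.mul_zero, Matrix.zero_mul, add_zero, hblock]
    rw [e11, e12, e21, e22, hBH, hB, hsmul, hsmul]
  rw [key]
  exact Matrix.posSemidef_conjTranspose_mul_self M
end

section
/- Let A ∈ ℂ^{n×n} be nonsingular and A = M - N a splitting with M nonsingular such that M*A + A*N is Hermitian positive definite. Then the spectral radius of T = M^{-1}N satisfies ρ(T) < 1. -/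
open Matrix
open scoped ComplexOrder

lemma eig_norm_lt {n : ℕ} (A M N : Matrix (Fin n) (Fin n) ℂ)
    (hA : IsUnit A) (hM : IsUnit M) (hMN : A = M - N)
    (hpd : (Mᴴ * A + Aᴴ * N).PosDef)
    {μ : ℂ} (hμ : μ ∈ spectrum ℂ (M⁻¹ * N)) : ‖μ‖₊ < 1 := by
  -- get eigenvector
  rw [← AlgEquiv.spectrum_eq (Matrix.toLinAlgEquiv' : Matrix (Fin n) (Fin n) ℂ ≃ₐ[ℂ] _),
    ← Module.End.hasEigenvalue_iff_mem_spectrum] at hμ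
  obtain ⟨x, hx⟩ := hμ.exists_hasEigenvector
  have hx0 : x ≠ 0 := hx.right
  have hxe : (M⁻¹ * N) *ᵥ x = μ • x := by
    have := hx.apply_eq_smul
    rwa [Matrix.toLinAlgEquiv'_apply] at this
  have hNx : N *ᵥ x = μ • (M *ᵥ x) := by
    have h1 : M *ᵥ ((M⁻¹ * N) *ᵥ x) = M *ᵥ (μ • x) := by rw [hxe]
    rw [mulVec_mulVec, ← Matrix.mul_assoc, Matrix.mul_nonsing_inv _ ((isUnit_iff_isUnit_det M).mp hM),
      Matrix.one_mul, mulVec_smul] at h1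
    exact h1
  have hAx : A *ᵥ x = (1 - μ) • (M *ᵥ x) := by
    rw [hMN, sub_mulVec, hNx, sub_smul, one_smul]
  set y := M *ᵥ x with hy
  have hy0 : y ≠ 0 := by
    intro h
    have := congrArg (M⁻¹ *ᵥ ·) h
    simp only [hy, mulVec_mulVec, Matrix.nonsing_inv_mul _ ((isUnit_iff_isUnit_det M).mp hM),
      one_mulVec, mulVec_zero] at this
    exact hx0 this
  have key := hpd.dotProduct_mulVec_pos hx0
  have hval : dotProduct (star x) ((Mᴴ * A + Aᴴ * N) *ᵥ x)
      = (1 - μ * (starRingEnd ℂ) μ) * dotProduct (star y) y := by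
    rw [add_mulVec, dotProduct_add, ← mulVec_mulVec, ← mulVec_mulVec,
      dotProduct_mulVec (star x) Mᴴ, dotProduct_mulVec (star x) Aᴴ,
      ← star_mulVec, ← star_mulVec, hAx, hNx, ← hy]
    simp only [star_smul, smul_dotProduct, dotProduct_smul, star_sub, star_one, smul_eq_mul]
    ring_nf
    rfl
  rw [hval] at key
  -- dotProduct (star y) y is a positive real
  have hyy : 0 < dotProduct (star y) y := by
    rw [show dotProduct (star y) y = star y ⬝ᵥ ((1 : Matrix (Fin n) (Fin n) ℂ) *ᵥ y) by
      rw [one_mulVec]]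
    exact Matrix.PosDef.one.dotProduct_mulVec_pos hy0
  have hmm : μ * (starRingEnd ℂ) μ = ((‖μ‖ : ℝ) ^ 2 : ℝ) := by
    rw [mul_comm, Complex.conj_mul']
    push_cast
    ring
  rw [hmm] at key
  -- from positivity in ℂ, deduce ‖μ‖ < 1
  have h1 : (0:ℂ) < ((1 - ‖μ‖^2 : ℝ) : ℂ) * dotProduct (star y) y := by
    convert key using 2
    push_cast; ring
  set c := dotProduct (star y) y with hc
  obtain ⟨hcre, hcim⟩ := Complex.pos_iff.mp hyy
  have hceq : c = ((c.re : ℝ) : ℂ) := Complex.ext rfl (by simp [← hcim])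
  rw [hceq, ← Complex.ofReal_mul, Complex.zero_lt_real] at h1
  have h2 : 0 < 1 - ‖μ‖ ^ 2 := by nlinarith [hcre, norm_nonneg μ]
  have h3 : ‖μ‖ < 1 := by nlinarith [norm_nonneg μ]
  exact_mod_cast h3

theorem stmt2 {n : ℕ} (A M N : Matrix (Fin n) (Fin n) ℂ)
    (hA : IsUnit A) (hM : IsUnit M) (hMN : A = M - N)
    (hpd : (Mᴴ * A + Aᴴ * N).PosDef) :
    spectralRadius ℂ (M⁻¹ * N) < 1 := by
  have hfin := Matrix.finite_spectrum (M⁻¹ * N)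
  set F := hfin.toFinset with hF
  have hbound : ∀ μ ∈ spectrum ℂ (M⁻¹ * N), ‖μ‖₊ < 1 :=
    fun μ hμ => eig_norm_lt A M N hA hM hMN hpd hμ
  have hsup : F.sup (fun μ => ‖μ‖₊) < 1 := by
    rw [Finset.sup_lt_iff (by norm_num : (⊥ : NNReal) < 1)]
    intro μ hμ
    exact hbound μ (hfin.mem_toFinset.mp hμ)
  calc spectralRadius ℂ (M⁻¹ * N) ≤ (F.sup (fun μ => ‖μ‖₊) : NNReal) := by
        rw [spectralRadius]
        apply iSup₂_le
        intro μ hμ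
        exact_mod_cast ENNReal.coe_le_coe.mpr (Finset.le_sup (hfin.mem_toFinset.mpr hμ))
    _ < 1 := by exact_mod_cast hsup
end

section
/- Let A ∈ ℂ^{n×n} and let A = M - N with A and M nonsingular, T = M^{-1}N. Then A - T*AT = (I - T*)(M*(A^{-1})*A + N)(I - T). -/
open Matrix

theorem stmt4 {n : ℕ} (A M N : Matrix (Fin n) (Fin n) ℂ)
    (hA : IsUnit A) (hM : IsUnit M) (hMN : A = M - N) :
    A - (M⁻¹ * N)ᴴ * A * (M⁻¹ * N) =
      (1 - (M⁻¹ * N)ᴴ) * (Mᴴ * (A⁻¹)ᴴ * A + N) * (1 - M⁻¹ * N) := by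
  have hMd : IsUnit M.det := (Matrix.isUnit_iff_isUnit_det M).mp hM
  have hAd : IsUnit A.det := (Matrix.isUnit_iff_isUnit_det A).mp hA
  haveI : Invertible M := M.invertibleOfIsUnitDet hMd
  haveI : Invertible Mᴴ := M.invertibleConjTranspose
  have hM1 : M⁻¹ * M = 1 := Matrix.nonsing_inv_mul M hMd
  have hMH1 : (Mᴴ)⁻¹ * Mᴴ = 1 := by
    apply Matrix.nonsing_inv_mul
    rw [Matrix.det_conjTranspose]; exact hMd.star
  have hA1 : Aᴴ * (A⁻¹)ᴴ = 1 := by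
    rw [← conjTranspose_mul, Matrix.nonsing_inv_mul A hAd, conjTranspose_one]
  have hT : (1 : Matrix (Fin n) (Fin n) ℂ) - M⁻¹ * N = M⁻¹ * A := by
    rw [hMN, mul_sub, hM1]
  have hTH : (1 : Matrix (Fin n) (Fin n) ℂ) - (M⁻¹ * N)ᴴ = Aᴴ * (Mᴴ)⁻¹ := by
    rw [← conjTranspose_one, ← conjTranspose_sub, hT, conjTranspose_mul,
      Matrix.conjTranspose_nonsing_inv]
  rw [hTH, hT, mul_add, add_mul]
  have e1 : Aᴴ * (Mᴴ)⁻¹ * (Mᴴ * (A⁻¹)ᴴ * A) = A := by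
    simp only [← mul_assoc]
    rw [mul_assoc Aᴴ, hMH1, mul_one, hA1, one_mul]
  rw [e1]
  subst hMN
  simp only [conjTranspose_sub, conjTranspose_mul, Matrix.conjTranspose_nonsing_inv,
    sub_mul, mul_sub, add_mul, mul_add, mul_one, one_mul, mul_assoc,
    Matrix.mul_inv_cancel_left_of_invertible, Matrix.inv_mul_cancel_left_of_invertible, hM1]
  abel
end

section
/- Let A ∈ ℂ^{n×n} be non-Hermitian positive definite (i.e., H = (A+A*)/2 is Hermitian positive definite), and suppose A = M_k - N_k, k=1,…,m, are splittings with M_k nonsingular such that each M_k*(A^{-1})*A + N_k is positive definite (Hermitian part positive definite), and E_k = β_k I with β_k ≥ 0, Σ_k β_k = 1. Then the iteration matrix T = Σ_{k=1}^m β_k M_k^{-1}N_k satisfies ρ(T) < 1. -/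
open Matrix
open scoped ComplexOrder ENNReal NNReal MatrixOrder

private lemma quad_conj {n : ℕ} (B K : Matrix (Fin n) (Fin n) ℂ) (x : Fin n → ℂ) :
    star x ⬝ᵥ (Bᴴ * K * B) *ᵥ x = star (B *ᵥ x) ⬝ᵥ K *ᵥ (B *ᵥ x) := by
  simp only [star_mulVec, Matrix.dotProduct_mulVec, vecMul_vecMul]

private lemma sum_mulVec' {n m : ℕ} (C : Fin m → Matrix (Fin n) (Fin n) ℂ) (v : Fin n → ℂ) :
    (∑ k, C k) *ᵥ v = ∑ k, C k *ᵥ v := by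
  ext i
  simp only [Matrix.mulVec, dotProduct, Matrix.sum_apply, Finset.sum_apply,
    Finset.sum_mul]
  rw [Finset.sum_comm]

private lemma dot_sum {n m : ℕ} (v : Fin n → ℂ) (H : Matrix (Fin n) (Fin n) ℂ)
    (c : Fin m → ℂ) (u : Fin m → (Fin n → ℂ)) :
    star v ⬝ᵥ H *ᵥ (∑ k, c k • u k) = ∑ k, c k * (star v ⬝ᵥ H *ᵥ u k) := by
  have h1 : H *ᵥ (∑ k, c k • u k) = ∑ k, c k • (H *ᵥ u k) := by
    rw [← Matrix.mulVecLin_apply, map_sum]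
    simp only [Matrix.mulVec_smul, Matrix.mulVecLin_apply]
  rw [h1]
  simp only [dotProduct, Finset.sum_apply, Pi.smul_apply, smul_eq_mul, Finset.mul_sum]
  rw [Finset.sum_comm]
  refine Finset.sum_congr rfl fun k _ => Finset.sum_congr rfl fun i _ => by ring

private lemma key_ident {n : ℕ} (A M : Matrix (Fin n) (Fin n) ℂ)
    (hA : IsUnit A.det) (hM : IsUnit M.det) :
    (1/2:ℂ) • (A + Aᴴ) - (M⁻¹*(M-A))ᴴ * ((1/2:ℂ) • (A + Aᴴ)) * (M⁻¹*(M-A))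
      = (M⁻¹*A)ᴴ * ((1/2:ℂ) • ((Mᴴ*(A⁻¹)ᴴ*A + (M - A)) + (Mᴴ*(A⁻¹)ᴴ*A + (M - A))ᴴ)) * (M⁻¹*A) := by
  haveI := A.invertibleOfIsUnitDet hA
  haveI := M.invertibleOfIsUnitDet hM
  haveI := Aᴴ.invertibleOfIsUnitDet (by rwa [det_conjTranspose, isUnit_star])
  haveI := Mᴴ.invertibleOfIsUnitDet (by rwa [det_conjTranspose, isUnit_star])
  simp only [conjTranspose_mul, conjTranspose_nonsing_inv, conjTranspose_add, conjTranspose_sub,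
    conjTranspose_smul, conjTranspose_conjTranspose, conjTranspose_one, star_one, star_div₀,
    Matrix.mul_sub, Matrix.sub_mul, Matrix.mul_add, Matrix.add_mul, Matrix.mul_smul, Matrix.smul_mul,
    smul_add, smul_sub, Matrix.mul_one, Matrix.one_mul, Matrix.mul_assoc,
    mul_inv_cancel_left_of_invertible, inv_mul_cancel_left_of_invertible,
    mul_inv_cancel_right_of_invertible, inv_mul_cancel_right_of_invertible,
    Matrix.inv_mul_of_invertible, Matrix.mul_inv_of_invertible]
  ring_nf
  abel

theorem stmt5 {n m : ℕ} (A : Matrix (Fin n) (Fin n) ℂ)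
    (hA : ((1 / 2 : ℂ) • (A + Aᴴ)).PosDef)
    (M N : Fin m → Matrix (Fin n) (Fin n) ℂ) (β : Fin m → ℝ)
    (hM : ∀ k, IsUnit (M k)) (hsplit : ∀ k, A = M k - N k)
    (hpd : ∀ k, ((1 / 2 : ℂ) • (((M k)ᴴ * (A⁻¹)ᴴ * A + N k) +
      ((M k)ᴴ * (A⁻¹)ᴴ * A + N k)ᴴ)).PosDef)
    (hβ : ∀ k, 0 ≤ β k) (hsum : ∑ k, β k = 1) :
    spectralRadius ℂ (∑ k, (β k : ℂ) • ((M k)⁻¹ * N k)) < 1 := by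
  classical
  set H : Matrix (Fin n) (Fin n) ℂ := (1 / 2 : ℂ) • (A + Aᴴ) with hHdef
  set T : Matrix (Fin n) (Fin n) ℂ := ∑ k, (β k : ℂ) • ((M k)⁻¹ * N k) with hTdef
  -- A is invertible
  have hAdet : IsUnit A.det := by
    by_contra h
    have hdet : A.det = 0 := by simpa [isUnit_iff_ne_zero] using h
    obtain ⟨v, hv, hAv⟩ := (Matrix.exists_mulVec_eq_zero_iff).mpr hdet
    have h2 : star v ⬝ᵥ Aᴴ *ᵥ v = 0 := by
      rw [Matrix.dotProduct_mulVec, ← Matrix.star_mulVec, hAv]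
      simp
    have h1 : star v ⬝ᵥ H *ᵥ v = 0 := by
      simp [hHdef, Matrix.add_mulVec, Matrix.smul_mulVec, dotProduct_add, hAv, h2]
    have := hA.dotProduct_mulVec_pos hv
    rw [h1] at this
    exact lt_irrefl _ this
  have hMdet : ∀ k, IsUnit (M k).det := fun k => (Matrix.isUnit_iff_isUnit_det _).mp (hM k)
  have hN : ∀ k, N k = M k - A := fun k => by rw [hsplit k]; abel
  -- square root of H
  set S : Matrix (Fin n) (Fin n) ℂ := CFC.sqrt H with hSdef
  have hSS : S * S = H := CFC.sqrt_mul_sqrt_self H hA.posSemidef.nonneg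
  have hSherm : Sᴴ = S := (CFC.sqrt_nonneg H).posSemidef.1
  have hquad : ∀ x y : Fin n → ℂ, star x ⬝ᵥ H *ᵥ y =
      (inner ℂ ((WithLp.equiv 2 (Fin n → ℂ)).symm (S *ᵥ x))
        ((WithLp.equiv 2 (Fin n → ℂ)).symm (S *ᵥ y)) : ℂ) := by
    intro x y
    rw [WithLp.equiv_symm_apply, EuclideanSpace.inner_toLp_toLp, Matrix.star_mulVec, hSherm,
      ← hSS, ← Matrix.mulVec_mulVec, Matrix.dotProduct_mulVec, dotProduct_comm]
  set g : (Fin n → ℂ) → ℝ := fun x => ‖(WithLp.equiv 2 (Fin n → ℂ)).symm (S *ᵥ x)‖ with hgdef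
  have hg_sq : ∀ x : Fin n → ℂ, star x ⬝ᵥ H *ᵥ x = ((g x : ℂ))^2 := by
    intro x
    rw [hquad x x, inner_self_eq_norm_sq_to_K]
    rfl
  -- key strict inequality
  have key : ∀ k (x : Fin n → ℂ), x ≠ 0 →
      star (((M k)⁻¹ * N k) *ᵥ x) ⬝ᵥ H *ᵥ (((M k)⁻¹ * N k) *ᵥ x) < star x ⬝ᵥ H *ᵥ x := by
    intro k x hx
    have hYdet : IsUnit ((M k)⁻¹ * A).det := by
      rw [Matrix.det_mul]
      exact (Matrix.isUnit_nonsing_inv_det _ (hMdet k)).mul hAdet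
    have hYx : ((M k)⁻¹ * A) *ᵥ x ≠ 0 := by
      intro h0
      apply hx
      have := congrArg (fun z => ((M k)⁻¹ * A)⁻¹ *ᵥ z) h0
      simpa [Matrix.mulVec_mulVec, Matrix.nonsing_inv_mul _ hYdet] using this
    have hpos := (hpd k).dotProduct_mulVec_pos hYx
    have hident := key_ident A (M k) hAdet (hMdet k)
    rw [← hN k] at hident
    have hq : star x ⬝ᵥ (H - ((M k)⁻¹ * N k)ᴴ * H * ((M k)⁻¹ * N k)) *ᵥ x
        = star x ⬝ᵥ H *ᵥ x - star (((M k)⁻¹ * N k) *ᵥ x) ⬝ᵥ H *ᵥ (((M k)⁻¹ * N k) *ᵥ x) := by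
      rw [Matrix.sub_mulVec, dotProduct_sub, quad_conj]
    have : (0:ℂ) < star x ⬝ᵥ (H - ((M k)⁻¹ * N k)ᴴ * H * ((M k)⁻¹ * N k)) *ᵥ x := by
      rw [hHdef, hident, quad_conj]
      exact hpos
    rw [hq] at this
    exact sub_pos.mp this
  -- finish via eigenvalues
  have hfin := Matrix.finite_spectrum (R := ℂ) T
  have hlt : ∀ μ ∈ spectrum ℂ T, ‖μ‖ < 1 := by
    intro μ hμ
    rw [spectrum.mem_iff] at hμ
    have hdet0 : (algebraMap ℂ (Matrix (Fin n) (Fin n) ℂ) μ - T).det = 0 := by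
      by_contra h
      exact hμ ((Matrix.isUnit_iff_isUnit_det _).mpr (isUnit_iff_ne_zero.mpr h))
    obtain ⟨v, hv, hTv⟩ := (Matrix.exists_mulVec_eq_zero_iff).mpr hdet0
    have hev : T *ᵥ v = μ • v := by
      have : μ • v - T *ᵥ v = 0 := by
        have := hTv
        rwa [Matrix.sub_mulVec, Algebra.algebraMap_eq_smul_one, Matrix.smul_mulVec,
          Matrix.one_mulVec] at this
      rw [sub_eq_zero] at this
      exact this.symm
    -- set up
    set w : Fin m → (Fin n → ℂ) := fun k => ((M k)⁻¹ * N k) *ᵥ v with hwdef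
    have hgv_pos : 0 < g v := by
      have hgnn : (0:ℝ) ≤ g v := norm_nonneg _
      rcases hgnn.lt_or_eq with h|h
      · exact h
      · exfalso
        have hp := hA.dotProduct_mulVec_pos hv
        rw [hg_sq v, ← h] at hp
        norm_num at hp
    have hgw : ∀ k, g (w k) < g v := by
      intro k
      have h1 := key k v hv
      rw [hg_sq, hg_sq] at h1
      have h2 : (g (w k))^2 < (g v)^2 := by exact_mod_cast h1
      exact lt_of_pow_lt_pow_left₀ 2 (le_of_lt hgv_pos) h2
    -- eigen equation in quadratic form
    have hTv2 : T *ᵥ v = ∑ k, (β k : ℂ) • (w k) := by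
      rw [hTdef, sum_mulVec']
      exact Finset.sum_congr rfl fun k _ => by rw [Matrix.smul_mulVec]
    have heq : μ * ((g v : ℂ))^2 = ∑ k, (β k : ℂ) * (star v ⬝ᵥ H *ᵥ w k) := by
      rw [← hg_sq v, ← dot_sum v H (fun k => (β k : ℂ)) w, ← hTv2, hev]
      rw [Matrix.mulVec_smul, dotProduct_smul]
      simp [smul_eq_mul]
    -- norms
    have habs : ‖μ‖ * (g v)^2 < (g v)^2 := by
      have h1 : ‖μ‖ * (g v)^2 = ‖μ * ((g v : ℂ))^2‖ := by
        rw [norm_mul]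
        congr 1
        rw [← Complex.ofReal_pow, Complex.norm_real, Real.norm_eq_abs]
        exact (abs_of_nonneg (by positivity)).symm
      rw [h1, heq]
      calc ‖∑ k, (β k : ℂ) * (star v ⬝ᵥ H *ᵥ w k)‖
          ≤ ∑ k, ‖(β k : ℂ) * (star v ⬝ᵥ H *ᵥ w k)‖ := norm_sum_le _ _
        _ ≤ ∑ k, β k * (g v * g (w k)) := by
            refine Finset.sum_le_sum fun k _ => ?_
            rw [norm_mul, Complex.norm_real, Real.norm_eq_abs, abs_of_nonneg (hβ k)]
            refine mul_le_mul_of_nonneg_left ?_ (hβ k)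
            rw [hquad v (w k)]
            exact norm_inner_le_norm _ _
        _ < ∑ k, β k * (g v * g v) := by
            obtain ⟨k0, hk0⟩ : ∃ k0, β k0 ≠ 0 := by
              by_contra hall
              push_neg at hall
              simp [hall] at hsum
            refine Finset.sum_lt_sum (fun k _ => ?_) ⟨k0, Finset.mem_univ _, ?_⟩
            · exact mul_le_mul_of_nonneg_left
                (mul_le_mul_of_nonneg_left (le_of_lt (hgw k)) (le_of_lt hgv_pos)) (hβ k)
            · have hb0 : 0 < β k0 := lt_of_le_of_ne (hβ k0) (Ne.symm hk0)
              exact mul_lt_mul_of_pos_left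
                (mul_lt_mul_of_pos_left (hgw k0) hgv_pos) hb0
        _ = (g v)^2 := by
            rw [← Finset.sum_mul, hsum, one_mul]
            ring
    have : ‖μ‖ < 1 := by
      have hgv2 : 0 < (g v)^2 := by positivity
      nlinarith [habs, hgv2]
    exact this
  -- conclude about spectralRadius
  have hsup : spectralRadius ℂ T = hfin.toFinset.sup (fun μ => (‖μ‖₊ : ℝ≥0∞)) := by
    rw [Finset.sup_eq_iSup]
    simp only [spectralRadius, hfin.mem_toFinset]
  rw [hsup]
  rw [Finset.sup_lt_iff (by norm_num : (⊥ : ℝ≥0∞) < 1)]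
  intro μ hμ
  rw [hfin.mem_toFinset] at hμ
  have := hlt μ hμ
  have h1 : ‖μ‖₊ < 1 := by
    rw [← NNReal.coe_lt_coe, coe_nnnorm, NNReal.coe_one]
    exact this
  exact_mod_cast h1
end

section
/- Let A ∈ ℂ^{n×n} be nonsingular and A = M - N with M nonsingular. If for all real t the Hermitian matrix A_t := M + M* - (e^{it}N + e^{-it}N*) is positive definite, then ρ(M^{-1}N) < 1. If A_t is positive semidefinite for all real t, then ρ(M^{-1}N) ≤ 1. -/
open Matrix Complex
open scoped ComplexOrder NNReal ENNReal

private lemma dp_conj {n : ℕ} (P : Matrix (Fin n) (Fin n) ℂ) (x : Fin n → ℂ) :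
    star x ⬝ᵥ Pᴴ *ᵥ x = star (star x ⬝ᵥ P *ᵥ x) := by
  rw [Matrix.dotProduct_mulVec, ← Matrix.star_mulVec, Matrix.star_dotProduct]

private lemma quad {n : ℕ} (M N : Matrix (Fin n) (Fin n) ℂ) (x : Fin n → ℂ) (k : ℂ)
    (hNx : N *ᵥ x = k • (M *ᵥ x)) (t : ℝ) :
    star x ⬝ᵥ ((M + Mᴴ - (Complex.exp (t * Complex.I) • N +
        Complex.exp (-(t * Complex.I)) • Nᴴ)) *ᵥ x)
      = (star x ⬝ᵥ M *ᵥ x + star (star x ⬝ᵥ M *ᵥ x))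
        - (Complex.exp (t * Complex.I) * (k * (star x ⬝ᵥ M *ᵥ x))
          + star (Complex.exp (t * Complex.I) * (k * (star x ⬝ᵥ M *ᵥ x)))) := by
  have he : Complex.exp (-(t * Complex.I)) = star (Complex.exp (t * Complex.I)) := by
    rw [Complex.star_def, ← Complex.exp_conj]
    congr 1
    simp [Complex.ext_iff]
  have hN : star x ⬝ᵥ N *ᵥ x = k * (star x ⬝ᵥ M *ᵥ x) := by
    rw [hNx, dotProduct_smul, smul_eq_mul]
  rw [Matrix.sub_mulVec, Matrix.add_mulVec, Matrix.add_mulVec, Matrix.smul_mulVec,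
    Matrix.smul_mulVec, dotProduct_sub, dotProduct_add,
    dotProduct_add, dotProduct_smul, dotProduct_smul,
    dp_conj, dp_conj, hN, he]
  ring_nf
  simp [smul_eq_mul, star_mul']

private lemma re_form (z w : ℂ) : (z + star z - (w + star w)).re = 2 * z.re - 2 * w.re := by
  simp [Complex.star_def]
  ring

private lemma exp_neg_arg_mul (w : ℂ) :
    Complex.exp ((↑(-w.arg) : ℂ) * Complex.I) * w = (‖w‖ : ℂ) := by
  nth_rewrite 2 [← Complex.norm_mul_exp_arg_mul_I w]
  rw [show ((-w.arg : ℝ) : ℂ) = -(w.arg : ℂ) by push_cast; ring, neg_mul, Complex.exp_neg,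
    mul_comm ((‖w‖ : ℂ)) (Complex.exp _), ← mul_assoc,
    inv_mul_cancel₀ (Complex.exp_ne_zero _), one_mul]

private lemma key {n : ℕ} (A M N : Matrix (Fin n) (Fin n) ℂ) (hA : IsUnit A)
    (hMN : A = M - N) (k : ℂ) (x : Fin n → ℂ) (hx : x ≠ 0)
    (hNx : N *ᵥ x = k • (M *ᵥ x)) :
    ((∀ t : ℝ, (M + Mᴴ - (Complex.exp (t * Complex.I) • N +
        Complex.exp (-(t * Complex.I)) • Nᴴ)).PosDef) → ‖k‖ < 1) ∧
    ((∀ t : ℝ, (M + Mᴴ - (Complex.exp (t * Complex.I) • N +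
        Complex.exp (-(t * Complex.I)) • Nᴴ)).PosSemidef) → ‖k‖ ≤ 1) := by
  set m : ℂ := star x ⬝ᵥ M *ᵥ x with hm
  set w : ℂ := k * m with hw
  set t₀ : ℝ := -w.arg with ht₀
  have habs : Complex.exp ((t₀ : ℂ) * Complex.I) * w = (‖w‖ : ℂ) :=
    exp_neg_arg_mul w
  -- real part of quadratic form at t₀
  have hre : ∀ t : ℝ, (star x ⬝ᵥ ((M + Mᴴ - (Complex.exp (t * Complex.I) • N +
      Complex.exp (-(t * Complex.I)) • Nᴴ)) *ᵥ x)).re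
      = 2 * m.re - 2 * (Complex.exp ((t : ℂ) * Complex.I) * w).re := by
    intro t
    rw [quad M N x k hNx t, ← hm, ← hw, re_form]
  have hre₀ : (star x ⬝ᵥ ((M + Mᴴ - (Complex.exp (t₀ * Complex.I) • N +
      Complex.exp (-(t₀ * Complex.I)) • Nᴴ)) *ᵥ x)).re
      = 2 * m.re - 2 * ‖w‖ := by
    rw [hre t₀, habs]
    simp
  have habsw : ‖w‖ = ‖k‖ * ‖m‖ := by
    rw [hw, norm_mul]
  have hrem : m.re ≤ ‖m‖ := Complex.re_le_norm m
  constructor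
  · intro hPD
    by_contra hk
    push_neg at hk
    have h1 := (hPD t₀).dotProduct_mulVec_pos hx
    rw [Complex.lt_def] at h1
    have h2 : 0 < 2 * m.re - 2 * ‖w‖ := by
      rw [← hre₀]; exact h1.1
    have : ‖m‖ ≤ ‖w‖ := by
      rw [habsw]
      nlinarith [norm_nonneg m]
    nlinarith
  · intro hPSD
    by_contra hk
    push_neg at hk
    have h1 := (hPSD t₀).dotProduct_mulVec_nonneg x
    rw [Complex.le_def] at h1
    have h2 : 0 ≤ 2 * m.re - 2 * ‖w‖ := by
      rw [← hre₀]; exact h1.1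
    -- deduce m = 0
    have hm0 : m = 0 := by
      have : ‖m‖ = 0 := by nlinarith [norm_nonneg m, norm_nonneg w]
      exact norm_eq_zero.mp this
    have hw0 : w = 0 := by rw [hw, hm0, mul_zero]
    -- quadratic form vanishes for all t, hence A_t x = 0
    have hAt : ∀ t : ℝ, (M + Mᴴ - (Complex.exp (t * Complex.I) • N +
        Complex.exp (-(t * Complex.I)) • Nᴴ)) *ᵥ x = 0 := by
      intro t
      refine ((hPSD t).dotProduct_mulVec_zero_iff x).mp ?_
      rw [quad M N x k hNx t, ← hm, ← hw, hm0, hw0]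
      simp
    -- evaluate at t = 0, π, π/2
    have h0 := hAt 0
    have hpi := hAt Real.pi
    have hpi2 := hAt (Real.pi / 2)
    rw [show Complex.exp ((0:ℝ) * Complex.I) = 1 by simp,
      show Complex.exp (-((0:ℝ) * Complex.I)) = 1 by simp] at h0
    rw [show Complex.exp ((Real.pi:ℝ) * Complex.I) = -1 from Complex.exp_pi_mul_I,
      show Complex.exp (-((Real.pi:ℝ) * Complex.I)) = -1 by
        rw [Complex.exp_neg, Complex.exp_pi_mul_I]; norm_num] at hpi
    rw [show Complex.exp ((Real.pi/2:ℝ) * Complex.I) = Complex.I by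
        push_cast; rw [Complex.exp_mul_I]; simp,
      show Complex.exp (-((Real.pi/2:ℝ) * Complex.I)) = -Complex.I by
        rw [Complex.exp_neg]; push_cast; rw [Complex.exp_mul_I]; simp] at hpi2
    simp only [one_smul, neg_one_smul, neg_smul, Matrix.sub_mulVec, Matrix.add_mulVec,
      Matrix.neg_mulVec, Matrix.smul_mulVec] at h0 hpi hpi2
    set u : Fin n → ℂ := M *ᵥ x + Mᴴ *ᵥ x
    set v : Fin n → ℂ := N *ᵥ x
    set w' : Fin n → ℂ := Nᴴ *ᵥ x
    have h1 : u = v + w' := sub_eq_zero.mp h0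
    have h2' : u = -v + -w' := sub_eq_zero.mp hpi
    have hvw : v + w' = 0 := by
      have h4 : (2:ℂ) • (v + w') = 0 := by
        rw [two_smul]
        calc v + w' + (v + w') = (v + w') + (-v + -w') := by rw [← h1, ← h2']
        _ = 0 := by abel
      exact (smul_eq_zero.mp h4).resolve_left (by norm_num)
    have hu : u = 0 := by rw [h1, hvw]
    have h3 : Complex.I • v + -(Complex.I • w') = 0 := by
      have := sub_eq_zero.mp hpi2
      rw [← this, hu]
    have hveqw : v = w' := by
      have h5 : Complex.I • (v - w') = 0 := by rw [smul_sub, sub_eq_add_neg]; exact h3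
      have h6 := (smul_eq_zero.mp h5).resolve_left Complex.I_ne_zero
      exact sub_eq_zero.mp h6
    have hv0 : v = 0 := by
      have h7 : (2:ℂ) • v = 0 := by rw [two_smul]; nth_rewrite 2 [hveqw]; exact hvw
      exact (smul_eq_zero.mp h7).resolve_left (by norm_num)
    -- N x = 0, so M x = 0 (k ≠ 0), so A x = 0: contradiction with invertibility
    have hk0 : k ≠ 0 := by
      intro h; rw [h] at hk; norm_num at hk
    have hMx : M *ᵥ x = 0 := by
      have : k • (M *ᵥ x) = 0 := by rw [← hNx]; exact hv0
      exact (smul_eq_zero.mp this).resolve_left hk0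
    have hAx : A *ᵥ x = 0 := by
      rw [hMN, Matrix.sub_mulVec, hMx]
      rw [show N *ᵥ x = 0 from hv0]
      simp
    have : A.det = 0 := Matrix.exists_mulVec_eq_zero_iff.mp ⟨x, hx, hAx⟩
    exact (isUnit_iff_ne_zero.mp ((Matrix.isUnit_iff_isUnit_det A).mp hA)) this

private lemma eigvec {n : ℕ} (M N : Matrix (Fin n) (Fin n) ℂ) (hdet : IsUnit M.det)
    (k : ℂ) (hk : k ∈ spectrum ℂ (M⁻¹ * N)) :
    ∃ x : Fin n → ℂ, x ≠ 0 ∧ N *ᵥ x = k • (M *ᵥ x) := by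
  rw [spectrum.mem_iff, Matrix.isUnit_iff_isUnit_det, isUnit_iff_ne_zero, not_not] at hk
  obtain ⟨x, hx, hx0⟩ := (Matrix.exists_mulVec_eq_zero_iff).mpr hk
  refine ⟨x, hx, ?_⟩
  rw [Matrix.sub_mulVec] at hx0
  have h2 : (algebraMap ℂ (Matrix (Fin n) (Fin n) ℂ) k) *ᵥ x = k • x := by
    ext i
    simp [Matrix.mulVec, Matrix.algebraMap_eq_diagonal, Matrix.diagonal, dotProduct]
  rw [h2] at hx0
  have hBx : (M⁻¹ * N) *ᵥ x = k • x := (sub_eq_zero.mp hx0).symm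
  have h5 : M *ᵥ ((M⁻¹ * N) *ᵥ x) = N *ᵥ x := by
    rw [Matrix.mulVec_mulVec, ← mul_assoc, Matrix.mul_nonsing_inv _ hdet, one_mul]
  rw [← h5, hBx, Matrix.mulVec_smul]

theorem stmt7 {n : ℕ} (A M N : Matrix (Fin n) (Fin n) ℂ)
    (hA : IsUnit A) (hM : IsUnit M) (hMN : A = M - N) :
    ((∀ t : ℝ, (M + Mᴴ - (Complex.exp (t * Complex.I) • N +
        Complex.exp (-(t * Complex.I)) • Nᴴ)).PosDef) →
      spectralRadius ℂ (M⁻¹ * N) < 1) ∧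
    ((∀ t : ℝ, (M + Mᴴ - (Complex.exp (t * Complex.I) • N +
        Complex.exp (-(t * Complex.I)) • Nᴴ)).PosSemidef) →
      spectralRadius ℂ (M⁻¹ * N) ≤ 1) := by
  have hdet : IsUnit M.det := (Matrix.isUnit_iff_isUnit_det M).mp hM
  constructor
  · intro hPD
    rw [spectralRadius]
    have hfin := (M⁻¹ * N).finite_spectrum
    have heq : (⨆ k ∈ spectrum ℂ (M⁻¹ * N), (‖k‖₊ : ℝ≥0∞))
        = hfin.toFinset.sup fun k => (‖k‖₊ : ℝ≥0∞) := by
      rw [Finset.sup_eq_iSup]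
      exact iSup_congr fun k => by simp [Set.Finite.mem_toFinset]
    rw [heq]
    refine Finset.sup_lt_iff (by norm_num) |>.mpr fun k hk => ?_
    obtain ⟨x, hx, hNx⟩ := eigvec M N hdet k (hfin.mem_toFinset.mp hk)
    have := (key A M N hA hMN k x hx hNx).1 hPD
    simpa [← ENNReal.coe_one, ENNReal.coe_lt_coe, ← NNReal.coe_lt_coe] using this
  · intro hPSD
    rw [spectralRadius]
    refine iSup₂_le fun k hk => ?_
    obtain ⟨x, hx, hNx⟩ := eigvec M N hdet k hk
    have := (key A M N hA hMN k x hx hNx).2 hPSD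
    simpa [← ENNReal.coe_one, ENNReal.coe_le_coe, ← NNReal.coe_le_coe] using this
end

section
/- Let A ∈ ℂ^{n×n} with multisplitting A = M_k - N_k (M_k nonsingular) and weighting matrices E_k, k = 1,…,m, with Σ_k E_k = I. Define T = Σ_{k=1}^m E_k M_k^{-1} N_k, and the nm×nm block matrices B = diag(M_1,…,M_m) and C = [N_i E_j]_{i,j=1}^m. Then ρ(T) = ρ(B^{-1}C). -/
open Matrix

lemma aux_radius_comm {A : Type*} [Ring A] [Algebra ℂ A] (a b : A) :
    spectralRadius ℂ (a * b) = spectralRadius ℂ (b * a) := by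
  have key : ∀ x y : A, spectralRadius ℂ (x * y) ≤ spectralRadius ℂ (y * x) := by
    intro x y
    unfold spectralRadius
    refine iSup₂_le fun k hk => ?_
    rcases eq_or_ne k 0 with rfl | h
    · simp
    · have hk' : k ∈ spectrum ℂ (y * x) := by
        have h2 : k ∈ spectrum ℂ (x * y) \ {0} := ⟨hk, h⟩
        rw [spectrum.nonzero_mul_comm] at h2
        exact h2.1
      exact le_iSup₂ (f := fun k (_ : k ∈ spectrum ℂ (y * x)) => (‖k‖₊ : ENNReal)) k hk'
  exact le_antisymm (key a b) (key b a)

lemma aux_radius_subsingleton {A : Type*} [Ring A] [Algebra ℂ A] [Subsingleton A] (a : A) :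
    spectralRadius ℂ a = 0 := by
  have h : spectrum ℂ a = ∅ :=
    Set.eq_empty_of_forall_notMem fun k hk => hk (isUnit_of_subsingleton _)
  unfold spectralRadius
  simp [h]

lemma aux_spec_blockDiag {o κ : Type*} [Fintype o] [DecidableEq o] [Fintype κ] [DecidableEq κ]
    (D : o → Matrix κ κ ℂ) :
    spectrum ℂ (blockDiagonal D) = ⋃ j, spectrum ℂ (D j) := by
  ext k
  have halg : algebraMap ℂ (Matrix (κ × o) (κ × o) ℂ) k - blockDiagonal D
      = blockDiagonal (fun j => algebraMap ℂ (Matrix κ κ ℂ) k - D j) := by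
    have hsplit' : (fun j => algebraMap ℂ (Matrix κ κ ℂ) k - D j)
        = (fun _ => algebraMap ℂ (Matrix κ κ ℂ) k) - D := rfl
    rw [hsplit', blockDiagonal_sub]
    congr 1
    have h1 : (fun _ : o => algebraMap ℂ (Matrix κ κ ℂ) k)
        = k • (1 : o → Matrix κ κ ℂ) := by
      funext j
      simp [Algebra.algebraMap_eq_smul_one]
    rw [h1, blockDiagonal_smul, blockDiagonal_one, Algebra.algebraMap_eq_smul_one]
  have hiff : IsUnit (algebraMap ℂ (Matrix (κ × o) (κ × o) ℂ) k - blockDiagonal D)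
      ↔ ∀ j, IsUnit (algebraMap ℂ (Matrix κ κ ℂ) k - D j) := by
    rw [halg, Matrix.isUnit_iff_isUnit_det, det_blockDiagonal, isUnit_iff_ne_zero,
      Finset.prod_ne_zero_iff]
    exact forall_congr' fun j => by
      simp [Matrix.isUnit_iff_isUnit_det, isUnit_iff_ne_zero]
  simp only [Set.mem_iUnion, spectrum.mem_iff, ← not_forall, ← hiff]

lemma aux_radius_blockDiag {o κ : Type*} [Fintype o] [DecidableEq o] [Fintype κ] [DecidableEq κ]
    (D : o → Matrix κ κ ℂ) :
    spectralRadius ℂ (blockDiagonal D) = ⨆ j, spectralRadius ℂ (D j) := by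
  unfold spectralRadius
  rw [aux_spec_blockDiag, iSup_iUnion]

theorem stmt8 {n m : ℕ} (A : Matrix (Fin n) (Fin n) ℂ)
    (M N E : Fin m → Matrix (Fin n) (Fin n) ℂ)
    (hM : ∀ k, IsUnit (M k)) (hsplit : ∀ k, A = M k - N k)
    (hE : ∑ k, E k = 1) :
    spectralRadius ℂ (∑ k, E k * ((M k)⁻¹ * N k)) =
      spectralRadius ℂ ((Matrix.blockDiagonal M)⁻¹ *
        Matrix.of (fun p q : Fin n × Fin m => (N p.2 * E q.2) p.1 q.1)) := by
  rcases Nat.eq_zero_or_pos n with hn | hn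
  · subst hn
    haveI h1 : Subsingleton (Matrix (Fin 0) (Fin 0) ℂ) :=
      ⟨fun a b => by ext i j; exact i.elim0⟩
    haveI h2 : Subsingleton (Matrix (Fin 0 × Fin m) (Fin 0 × Fin m) ℂ) :=
      ⟨fun a b => by ext i j; exact i.1.elim0⟩
    rw [aux_radius_subsingleton, aux_radius_subsingleton]
  · have hm : 0 < m := by
      by_contra hm
      push_neg at hm
      interval_cases m
      have := congrFun (congrFun hE ⟨0, hn⟩) ⟨0, hn⟩
      simp at this
    haveI : NeZero m := ⟨hm.ne'⟩
    haveI : NeZero n := ⟨hn.ne'⟩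
    set T : Matrix (Fin n) (Fin n) ℂ := ∑ k, E k * ((M k)⁻¹ * N k) with hT
    set X : Matrix (Fin n × Fin m) (Fin n × Fin m) ℂ :=
      Matrix.of (fun p q => if p.2 = 0 then (E q.2) p.1 q.1 else 0) with hX
    set Y : Matrix (Fin n × Fin m) (Fin n × Fin m) ℂ :=
      Matrix.of (fun p q => if q.2 = 0 then ((M p.2)⁻¹ * N p.2) p.1 q.1 else 0) with hY
    have hinv : (blockDiagonal M)⁻¹ = blockDiagonal (fun k => (M k)⁻¹) := by
      apply Matrix.inv_eq_right_inv
      rw [← blockDiagonal_mul]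
      have h3 : (fun k => M k * (M k)⁻¹) = fun _ => (1 : Matrix (Fin n) (Fin n) ℂ) := by
        funext k
        exact Matrix.mul_nonsing_inv _ ((Matrix.isUnit_iff_isUnit_det _).mp (hM k))
      rw [h3]
      exact blockDiagonal_one
    have hRHS : (blockDiagonal M)⁻¹ *
        Matrix.of (fun p q : Fin n × Fin m => (N p.2 * E q.2) p.1 q.1) = Y * X := by
      rw [hinv]
      ext ⟨i, k⟩ ⟨j, l⟩
      have h1 : (blockDiagonal (fun k => (M k)⁻¹) *
          Matrix.of (fun p q : Fin n × Fin m => (N p.2 * E q.2) p.1 q.1)) (i, k) (j, l)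
          = ((M k)⁻¹ * (N k * E l)) i j := by
        rw [Matrix.mul_apply, Fintype.sum_prod_type]
        simp only [blockDiagonal_apply, of_apply, ite_mul, zero_mul,
          Finset.sum_ite_eq, Finset.mem_univ, if_true]
        rw [← Matrix.mul_apply]
      have h2 : (Y * X) (i, k) (j, l) = (((M k)⁻¹ * N k) * E l) i j := by
        rw [Matrix.mul_apply, Fintype.sum_prod_type, hX, hY]
        simp only [of_apply, ite_mul, zero_mul, mul_ite, mul_zero,
          Finset.sum_ite_eq', Finset.mem_univ, if_true]
        rw [← Matrix.mul_apply]
      rw [h1, h2, mul_assoc]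
    have hXY : X * Y = blockDiagonal (fun c : Fin m => if c = 0 then T else 0) := by
      ext ⟨i, k⟩ ⟨j, l⟩
      rw [Matrix.mul_apply, Fintype.sum_prod_type, hX, hY, hT]
      rcases eq_or_ne k 0 with rfl | hk <;> rcases eq_or_ne l 0 with rfl | hl
      · simp only [of_apply, if_true, blockDiagonal_apply, Matrix.sum_apply, Matrix.mul_apply,
          ite_mul, zero_mul, mul_ite, mul_zero, reduceIte]
        rw [Finset.sum_comm]
      · simp [blockDiagonal_apply, hl, Ne.symm hl]
      · simp [blockDiagonal_apply, hk]
      · simp [blockDiagonal_apply, hk, hl]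
    have hzero : spectralRadius ℂ (0 : Matrix (Fin n) (Fin n) ℂ) = 0 := by
      unfold spectralRadius
      rw [spectrum.zero_eq]
      simp
    have hrad : spectralRadius ℂ (X * Y) = spectralRadius ℂ T := by
      rw [hXY, aux_radius_blockDiag]
      apply le_antisymm
      · refine iSup_le fun j => ?_
        rcases eq_or_ne j 0 with rfl | hj
        · simp
        · simp [hj, hzero]
      · have h4 := le_iSup (fun j : Fin m =>
          spectralRadius ℂ (if j = 0 then T else 0)) 0
        simpa using h4
    rw [hRHS, ← aux_radius_comm, hrad]
end

section
/- Let A ∈ ℂ^{n×n} be non-Hermitian positive definite and A = M - N a splitting with N Hermitian positive semidefinite. Then ρ(M^{-1}N) < 1. -/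
open Matrix
open scoped ComplexOrder

theorem stmt11 {n : ℕ} (A M N : Matrix (Fin n) (Fin n) ℂ)
    (hA : ((1 / 2 : ℂ) • (A + Aᴴ)).PosDef)
    (hM : IsUnit M) (hMN : A = M - N) (hN : N.PosSemidef) :
    spectralRadius ℂ (M⁻¹ * N) < 1 := by
  have key : ∀ μ ∈ spectrum ℂ (M⁻¹ * N), ‖μ‖ < 1 := by
    intro μ hμ
    rw [← AlgEquiv.spectrum_eq (Matrix.toLinAlgEquiv' (n := Fin n) (R := ℂ)),
      ← Module.End.hasEigenvalue_iff_mem_spectrum] at hμ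
    obtain ⟨x, hx⟩ := hμ.exists_hasEigenvector
    have hx0 : x ≠ 0 := hx.right
    have hxe : (M⁻¹ * N) *ᵥ x = μ • x := by
      have := hx.apply_eq_smul
      simpa [Matrix.toLinAlgEquiv'_apply] using this
    have hMAN : M = A + N := by rw [hMN]; abel
    have hNx : N *ᵥ x = μ • (M *ᵥ x) := by
      have h1 : M *ᵥ ((M⁻¹ * N) *ᵥ x) = N *ᵥ x := by
        rw [Matrix.mulVec_mulVec, ← Matrix.mul_assoc,
          Matrix.mul_nonsing_inv M ((Matrix.isUnit_iff_isUnit_det M).mp hM), Matrix.one_mul]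
      rw [hxe, Matrix.mulVec_smul] at h1
      exact h1.symm
    set a := star x ⬝ᵥ (A *ᵥ x) with ha
    set s := star x ⬝ᵥ (N *ᵥ x) with hs
    have hseq : s = μ * (a + s) := by
      conv_lhs => rw [hs, hNx, hMAN]
      rw [Matrix.add_mulVec, dotProduct_smul, dotProduct_add, smul_eq_mul]
    have hstar : star x ⬝ᵥ (Aᴴ *ᵥ x) = star a := by
      rw [ha, ← Matrix.star_dotProduct_star, Matrix.star_mulVec, star_star,
        Matrix.dotProduct_mulVec]
    have har : 0 < a.re := by
      have h2 := (Matrix.posDef_iff_dotProduct_mulVec.mp hA).2 hx0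
      rw [Matrix.smul_mulVec, Matrix.add_mulVec, dotProduct_smul,
        dotProduct_add, ← ha, hstar, smul_eq_mul] at h2
      have h3 : (1 / 2 : ℂ) * (a + star a) = (a.re : ℂ) := by
        rw [show star a = (starRingEnd ℂ) a from rfl, Complex.add_conj]
        push_cast; ring
      rw [h3] at h2
      exact Complex.zero_lt_real.mp h2
    have hsnn := (Matrix.posSemidef_iff_dotProduct_mulVec.mp hN).2 x
    rw [← hs] at hsnn
    have hsim : s.im = 0 := ((Complex.le_def.mp hsnn).2).symm
    have hsre : 0 ≤ s.re := (Complex.le_def.mp hsnn).1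
    rcases eq_or_ne μ 0 with h0 | h0
    · simp [h0]
    -- extract real and imaginary equations
    have e1 := congrArg Complex.re hseq
    have e2 := congrArg Complex.im hseq
    simp only [Complex.mul_re, Complex.mul_im, Complex.add_re, Complex.add_im, hsim,
      add_zero, mul_zero, zero_mul, sub_zero] at e1 e2
    set p := μ.re
    set q := μ.im
    have hpq : p ≠ 0 ∨ q ≠ 0 := by
      by_contra hc
      push_neg at hc
      exact h0 (Complex.ext hc.1 hc.2)
    have hm : 0 < p ^ 2 + q ^ 2 := by
      rcases hpq with h | h <;> positivity
    have keyeq : (p - p ^ 2 - q ^ 2) * s.re = (p ^ 2 + q ^ 2) * a.re := by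
      linear_combination p * e1 + q * e2
    have hrhs : 0 < (p ^ 2 + q ^ 2) * a.re := mul_pos hm har
    have hsrp : 0 < s.re := by
      by_contra hc
      push_neg at hc
      have h : s.re = 0 := le_antisymm hc hsre
      rw [h, mul_zero] at keyeq
      linarith [hrhs]
    have hlt : p ^ 2 + q ^ 2 < p := by nlinarith
    have habs : ‖μ‖ ^ 2 = p ^ 2 + q ^ 2 := by
      rw [Complex.sq_norm, Complex.normSq_apply]
      ring
    have hple : p ≤ ‖μ‖ := Complex.re_le_norm μ
    have hnpos : 0 < ‖μ‖ := norm_pos_iff.mpr h0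
    nlinarith [habs, hple, hnpos, hlt]
  rcases (spectrum ℂ (M⁻¹ * N)).eq_empty_or_nonempty with hS | hS
  · rw [spectralRadius, hS]
    simp
  · obtain ⟨m, hmS, hmax⟩ := Set.exists_max_image _ (fun k => ‖k‖₊)
      (Matrix.finite_spectrum _) hS
    have hle : spectralRadius ℂ (M⁻¹ * N) ≤ (‖m‖₊ : ENNReal) := by
      rw [spectralRadius]
      exact iSup₂_le fun k hk => ENNReal.coe_le_coe.mpr (hmax k hk)
    refine lt_of_le_of_lt hle ?_
    have h1 : ‖m‖₊ < 1 := by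
      rw [← NNReal.coe_lt_coe]
      simpa using key m hmS
    exact_mod_cast h1
end

section
/- Let A = P_k + S_k for k = 1,…,m, where each P_k is positive definite (Hermitian part positive definite) and each S_k is skew-Hermitian, let α_k > 0, and set M(α_k) = (α_kI + S_k)^{-1}(α_kI - P_k)(α_kI + P_k)^{-1}(α_kI - S_k). Then ρ(M(α_k)) ≤ ‖(α_kI - P_k)(α_kI + P_k)^{-1}‖₂ < 1. -/
open Matrix
open scoped ComplexOrder Matrix.Norms.L2Operator

namespace Stmt14Aux

variable {n : ℕ}

noncomputable def en (y : Fin n → ℂ) : ℝ := ‖(WithLp.equiv 2 (Fin n → ℂ)).symm y‖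

lemma en_nonneg (y : Fin n → ℂ) : 0 ≤ en y := norm_nonneg _

lemma en_sq (y : Fin n → ℂ) : en y ^ 2 = ((star y) ⬝ᵥ y).re := by
  have h := @inner_self_eq_norm_sq ℂ _ _ _ _ ((WithLp.equiv 2 (Fin n → ℂ)).symm y)
  rw [en, ← h, EuclideanSpace.inner_eq_star_dotProduct]
  simp [RCLike.re_to_complex]; rw [dotProduct_comm]

lemma en_pos {y : Fin n → ℂ} (hy : y ≠ 0) : 0 < en y := by
  refine norm_pos_iff.mpr fun h => hy ?_
  simpa using congrArg (WithLp.equiv 2 (Fin n → ℂ)) h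

lemma dot_conj (M : Matrix (Fin n) (Fin n) ℂ) (x : Fin n → ℂ) :
    star x ⬝ᵥ (Mᴴ *ᵥ x) = star (star x ⬝ᵥ (M *ᵥ x)) := by
  rw [dotProduct_mulVec, ← star_mulVec, star_dotProduct]

lemma en_sq_mulVec (M : Matrix (Fin n) (Fin n) ℂ) (x : Fin n → ℂ) :
    en (M *ᵥ x) ^ 2 = ((star x) ⬝ᵥ ((Mᴴ * M) *ᵥ x)).re := by
  rw [en_sq]
  congr 1
  calc star (M *ᵥ x) ⬝ᵥ (M *ᵥ x) = (star x ᵥ* Mᴴ) ⬝ᵥ (M *ᵥ x) := by rw [star_mulVec]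
    _ = star x ⬝ᵥ (Mᴴ *ᵥ (M *ᵥ x)) := (dotProduct_mulVec _ _ _).symm
    _ = star x ⬝ᵥ ((Mᴴ * M) *ᵥ x) := by rw [mulVec_mulVec]

lemma re_dot_smul_one (α : ℝ) (x : Fin n → ℂ) :
    ((star x) ⬝ᵥ ((((α:ℂ) • (1 : Matrix (Fin n) (Fin n) ℂ))) *ᵥ x)).re = α * en x ^ 2 := by
  rw [en_sq, smul_mulVec, one_mulVec, dotProduct_smul]
  simp [smul_eq_mul, Complex.mul_re]

lemma hermPart_re (P : Matrix (Fin n) (Fin n) ℂ) (x : Fin n → ℂ) :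
    ((star x) ⬝ᵥ ((((1/2 : ℂ)) • (P + Pᴴ)) *ᵥ x)).re = ((star x) ⬝ᵥ (P *ᵥ x)).re := by
  rw [smul_mulVec, dotProduct_smul, add_mulVec, dotProduct_add, dot_conj]
  set z := star x ⬝ᵥ (P *ᵥ x)
  have : z + star z = ((2 * z.re : ℝ) : ℂ) := by
    rw [Complex.star_def, Complex.add_conj]
  rw [this]
  simp [Complex.mul_re]

lemma re_skew {S : Matrix (Fin n) (Fin n) ℂ} (hS : Sᴴ = -S) (x : Fin n → ℂ) :
    ((star x) ⬝ᵥ (S *ᵥ x)).re = 0 := by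
  have h := dot_conj S x
  rw [hS, neg_mulVec, dotProduct_neg] at h
  have := congrArg Complex.re h
  simp [Complex.star_def] at this
  linarith

lemma isUnit_of_pos (B : Matrix (Fin n) (Fin n) ℂ)
    (h : ∀ x : Fin n → ℂ, x ≠ 0 → 0 < ((star x) ⬝ᵥ (B *ᵥ x)).re) : IsUnit B := by
  rw [← Matrix.mulVec_injective_iff_isUnit]
  intro x y hxy
  by_contra hne
  have hsub : B *ᵥ (x - y) = 0 := by rw [mulVec_sub, hxy, sub_self]
  have := h (x - y) (sub_ne_zero.mpr hne)
  rw [hsub] at this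
  simp at this

lemma isUnit_aP {P : Matrix (Fin n) (Fin n) ℂ} (hP : ((1/2 : ℂ) • (P + Pᴴ)).PosDef)
    {α : ℝ} (hα : 0 < α) : IsUnit ((α : ℂ) • (1 : Matrix (Fin n) (Fin n) ℂ) + P) := by
  refine isUnit_of_pos _ fun x hx => ?_
  rw [add_mulVec, dotProduct_add, Complex.add_re, re_dot_smul_one]
  have h1 : 0 < ((star x) ⬝ᵥ (P *ᵥ x)).re := by
    have := hP.re_dotProduct_pos hx
    rw [RCLike.re_to_complex] at this
    rw [← hermPart_re]
    exact this
  have h2 : 0 < en x := en_pos hx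
  have h3 := mul_pos hα (pow_pos h2 2)
  linarith

lemma isUnit_aS {S : Matrix (Fin n) (Fin n) ℂ} (hS : Sᴴ = -S)
    {α : ℝ} (hα : 0 < α) : IsUnit ((α : ℂ) • (1 : Matrix (Fin n) (Fin n) ℂ) + S) := by
  refine isUnit_of_pos _ fun x hx => ?_
  rw [add_mulVec, dotProduct_add, Complex.add_re, re_dot_smul_one, re_skew hS]
  have h2 : 0 < en x := en_pos hx
  have h3 := mul_pos hα (pow_pos h2 2)
  linarith

lemma key_lt {P : Matrix (Fin n) (Fin n) ℂ} (hP : ((1/2 : ℂ) • (P + Pᴴ)).PosDef)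
    {α : ℝ} (hα : 0 < α) {x : Fin n → ℂ} (hx : x ≠ 0) :
    en (((α : ℂ) • (1 : Matrix (Fin n) (Fin n) ℂ) - P) *ᵥ x)
      < en (((α : ℂ) • (1 : Matrix (Fin n) (Fin n) ℂ) + P) *ᵥ x) := by
  set a : Matrix (Fin n) (Fin n) ℂ := (α : ℂ) • 1 with ha
  have hmat : (a + P)ᴴ * (a + P)
      = (a - P)ᴴ * (a - P) + ((4 * α : ℝ) : ℂ) • ((1/2 : ℂ) • (P + Pᴴ)) := by
    have haH : aᴴ = a := by
      rw [ha, conjTranspose_smul, conjTranspose_one]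
      simp [Complex.star_def, Complex.conj_ofReal]
    rw [conjTranspose_add, conjTranspose_sub, haH]
    simp only [ha, add_mul, mul_add, sub_mul, mul_sub, smul_mul_assoc, mul_smul_comm,
      one_mul, mul_one, smul_smul, smul_add]
    module
  have h1 := en_sq_mulVec (a + P) x
  have h2 := en_sq_mulVec (a - P) x
  have hpos : 0 < ((star x) ⬝ᵥ ((((1/2 : ℂ)) • (P + Pᴴ)) *ᵥ x)).re := by
    have := hP.re_dotProduct_pos hx
    rwa [RCLike.re_to_complex] at this
  have hsq : en ((a - P) *ᵥ x) ^ 2 < en ((a + P) *ᵥ x) ^ 2 := by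
    rw [h1, h2, hmat, add_mulVec, dotProduct_add, Complex.add_re, smul_mulVec,
      dotProduct_smul]
    have : (((4 * α : ℝ) : ℂ) • ((star x) ⬝ᵥ ((((1/2 : ℂ)) • (P + Pᴴ)) *ᵥ x))).re
        = (4 * α) * ((star x) ⬝ᵥ ((((1/2 : ℂ)) • (P + Pᴴ)) *ᵥ x)).re := by
      simp [Complex.smul_re]
    rw [this]
    nlinarith
  exact lt_of_pow_lt_pow_left₀ 2 (en_nonneg _) hsq

lemma key_eq {S : Matrix (Fin n) (Fin n) ℂ} (hS : Sᴴ = -S) (α : ℝ) (x : Fin n → ℂ) :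
    en (((α : ℂ) • (1 : Matrix (Fin n) (Fin n) ℂ) - S) *ᵥ x)
      = en (((α : ℂ) • (1 : Matrix (Fin n) (Fin n) ℂ) + S) *ᵥ x) := by
  set a : Matrix (Fin n) (Fin n) ℂ := (α : ℂ) • 1 with ha
  have haH : aᴴ = a := by
    rw [ha, conjTranspose_smul, conjTranspose_one]
    simp [Complex.star_def, Complex.conj_ofReal]
  have hmat : (a - S)ᴴ * (a - S) = (a + S)ᴴ * (a + S) := by
    rw [conjTranspose_add, conjTranspose_sub, haH, hS]
    simp only [ha, add_mul, mul_add, sub_mul, mul_sub, smul_mul_assoc, mul_smul_comm,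
      one_mul, mul_one, sub_neg_eq_add, neg_mul, mul_neg]
    module
  have hsq : en ((a - S) *ᵥ x) ^ 2 = en ((a + S) *ᵥ x) ^ 2 := by
    rw [en_sq_mulVec, en_sq_mulVec, hmat]
  rw [← Real.sqrt_sq (en_nonneg ((a - S) *ᵥ x)), ← Real.sqrt_sq (en_nonneg ((a + S) *ᵥ x)), hsq]

lemma opNorm_lt_one {E : Type*} [NormedAddCommGroup E] [NormedSpace ℂ E]
    [FiniteDimensional ℂ E] [Nontrivial E] (f : E →L[ℂ] E)
    (h : ∀ x : E, x ≠ 0 → ‖f x‖ < ‖x‖) : ‖f‖ < 1 := by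
  have hc : IsCompact (Metric.sphere (0 : E) 1) := isCompact_sphere 0 1
  have hne : (Metric.sphere (0 : E) 1).Nonempty := NormedSpace.sphere_nonempty.mpr zero_le_one
  obtain ⟨x₀, hx₀, hmax'⟩ := hc.exists_isMaxOn hne
    (Continuous.continuousOn (by continuity : Continuous fun y : E => ‖f y‖))
  have hmax : ∀ y ∈ Metric.sphere (0 : E) 1, ‖f y‖ ≤ ‖f x₀‖ := fun y hy => hmax' hy
  have hx₀n : ‖x₀‖ = 1 := mem_sphere_zero_iff_norm.mp hx₀
  have hx₀0 : x₀ ≠ 0 := fun h0 => by simp [h0] at hx₀n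
  have hlt : ‖f x₀‖ < 1 := by have := h x₀ hx₀0; rwa [hx₀n] at this
  have hle : ‖f‖ ≤ ‖f x₀‖ := by
    apply ContinuousLinearMap.opNorm_le_bound f (norm_nonneg _)
    intro x
    rcases eq_or_ne x 0 with rfl | hx
    · simp
    · have hxp : 0 < ‖x‖ := norm_pos_iff.mpr hx
      have hxs : (((‖x‖⁻¹ : ℝ) : ℂ) • x) ∈ Metric.sphere (0 : E) 1 := by
        rw [mem_sphere_zero_iff_norm, norm_smul]
        simp [abs_of_pos (inv_pos.mpr hxp), inv_mul_cancel₀ (ne_of_gt hxp)]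
      have hm := hmax _ hxs
      rw [ContinuousLinearMap.map_smul, norm_smul] at hm
      have : ‖((‖x‖⁻¹ : ℝ) : ℂ)‖ = ‖x‖⁻¹ := by
        simp [abs_of_pos (inv_pos.mpr hxp)]
      rw [this] at hm
      calc ‖f x‖ = ‖x‖ * (‖x‖⁻¹ * ‖f x‖) := by field_simp
        _ ≤ ‖x‖ * ‖f x₀‖ := by
            exact mul_le_mul_of_nonneg_left hm (le_of_lt hxp)
        _ = ‖f x₀‖ * ‖x‖ := by ring
  linarith

lemma specRad_comm (a b : Matrix (Fin n) (Fin n) ℂ) :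
    spectralRadius ℂ (a * b) = spectralRadius ℂ (b * a) := by
  have key : ∀ c d : Matrix (Fin n) (Fin n) ℂ,
      spectralRadius ℂ (c * d) ≤ spectralRadius ℂ (d * c) := by
    intro c d
    simp only [spectralRadius]
    apply iSup₂_le
    intro k hk
    by_cases h0 : k = 0
    · simp [h0]
    · have hk' : k ∈ spectrum ℂ (c * d) \ {0} := ⟨hk, h0⟩
      rw [spectrum.nonzero_mul_comm] at hk'
      exact le_iSup₂ (f := fun (k : ℂ) (_ : k ∈ spectrum ℂ (d * c)) => (‖k‖₊ : ENNReal)) k hk'.1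
  exact le_antisymm (key a b) (key b a)

lemma toCLM_apply (M : Matrix (Fin n) (Fin n) ℂ) (x : EuclideanSpace ℂ (Fin n)) :
    toEuclideanCLM (𝕜 := ℂ) M x
      = (WithLp.equiv 2 (Fin n → ℂ)).symm (M *ᵥ (WithLp.equiv 2 (Fin n → ℂ)) x) := by
  apply (WithLp.equiv 2 (Fin n → ℂ)).injective
  change WithLp.ofLp (toEuclideanCLM (𝕜 := ℂ) M x) = _
  rw [ofLp_toEuclideanCLM]
  simp [Matrix.toLin'_apply]

end Stmt14Aux

open Stmt14Aux

theorem stmt14 {n m : ℕ} (A : Matrix (Fin n) (Fin n) ℂ)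
    (P S : Fin m → Matrix (Fin n) (Fin n) ℂ) (α : Fin m → ℝ)
    (hsplit : ∀ k, A = P k + S k)
    (hP : ∀ k, ((1 / 2 : ℂ) • (P k + (P k)ᴴ)).PosDef)
    (hS : ∀ k, (S k)ᴴ = -S k)
    (hα : ∀ k, 0 < α k) (k : Fin m) :
    spectralRadius ℂ
        (((α k : ℂ) • (1 : Matrix (Fin n) (Fin n) ℂ) + S k)⁻¹ *
          ((α k : ℂ) • 1 - P k) * ((α k : ℂ) • 1 + P k)⁻¹ *
          ((α k : ℂ) • 1 - S k)) ≤
      (‖((α k : ℂ) • (1 : Matrix (Fin n) (Fin n) ℂ) - P k) *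
        ((α k : ℂ) • 1 + P k)⁻¹‖₊ : ENNReal) ∧
    ‖((α k : ℂ) • (1 : Matrix (Fin n) (Fin n) ℂ) - P k) *
      ((α k : ℂ) • 1 + P k)⁻¹‖ < 1 := by
  rcases Nat.eq_zero_or_pos n with hn | hn
  · subst hn
    haveI : Subsingleton (Matrix (Fin 0) (Fin 0) ℂ) :=
      ⟨fun a b => by ext i j; exact i.elim0⟩
    constructor
    · rw [Subsingleton.elim (((α k : ℂ) • (1 : Matrix (Fin 0) (Fin 0) ℂ) + S k)⁻¹ *
          ((α k : ℂ) • 1 - P k) * ((α k : ℂ) • 1 + P k)⁻¹ *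
          ((α k : ℂ) • 1 - S k)) 0, spectrum.spectralRadius_zero]
      exact zero_le
    · rw [Subsingleton.elim (((α k : ℂ) • (1 : Matrix (Fin 0) (Fin 0) ℂ) - P k) *
        ((α k : ℂ) • 1 + P k)⁻¹) 0, norm_zero]
      exact one_pos
  · haveI : Nonempty (Fin n) := ⟨⟨0, hn⟩⟩
    haveI : Nontrivial (EuclideanSpace ℂ (Fin n)) := inferInstance
    haveI : NormOneClass (Matrix (Fin n) (Fin n) ℂ) :=
      ⟨by rw [Matrix.cstar_norm_def, _root_.map_one, ContinuousLinearMap.one_def, ContinuousLinearMap.norm_id]⟩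
    set a : Matrix (Fin n) (Fin n) ℂ := (α k : ℂ) • 1 with ha
    set T : Matrix (Fin n) (Fin n) ℂ := (a - P k) * (a + P k)⁻¹ with hT
    set Q : Matrix (Fin n) (Fin n) ℂ := (a - S k) * (a + S k)⁻¹ with hQ
    have hUP : IsUnit (a + P k) := isUnit_aP (hP k) (hα k)
    have hUS : IsUnit (a + S k) := isUnit_aS (hS k) (hα k)
    have hUPd : IsUnit (a + P k).det := (Matrix.isUnit_iff_isUnit_det _).mp hUP
    have hUSd : IsUnit (a + S k).det := (Matrix.isUnit_iff_isUnit_det _).mp hUS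
    -- norm of T is < 1
    have hTnorm : ‖T‖ < 1 := by
      rw [Matrix.cstar_norm_def]
      apply opNorm_lt_one
      intro x hx
      set v : Fin n → ℂ := (WithLp.equiv 2 (Fin n → ℂ)) x with hv
      have hv0 : v ≠ 0 := fun h => hx (by
        have := congrArg (WithLp.equiv 2 (Fin n → ℂ)).symm h
        simpa [hv] using this)
      set y : Fin n → ℂ := (a + P k)⁻¹ *ᵥ v with hy
      have hyv : (a + P k) *ᵥ y = v := by
        rw [hy, mulVec_mulVec, Matrix.mul_nonsing_inv _ hUPd, one_mulVec]
      have hy0 : y ≠ 0 := fun h => hv0 (by rw [← hyv, h, mulVec_zero])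
      have happ : ‖toEuclideanCLM (𝕜 := ℂ) T x‖ = en (T *ᵥ v) := by
        rw [toCLM_apply]; rfl
      have hxv : ‖x‖ = en v := by
        simp [en, hv]
      rw [happ, hxv]
      have hTv : T *ᵥ v = (a - P k) *ᵥ y := by
        rw [hT, ← mulVec_mulVec, hy]
      rw [hTv, ← hyv]
      exact key_lt (hP k) (hα k) hy0
    -- norm of Q is ≤ 1
    have hQiso : ∀ x : EuclideanSpace ℂ (Fin n), ‖toEuclideanCLM (𝕜 := ℂ) Q x‖ = ‖x‖ := by
      intro x
      set v : Fin n → ℂ := (WithLp.equiv 2 (Fin n → ℂ)) x with hv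
      set y : Fin n → ℂ := (a + S k)⁻¹ *ᵥ v with hy
      have hyv : (a + S k) *ᵥ y = v := by
        rw [hy, mulVec_mulVec, Matrix.mul_nonsing_inv _ hUSd, one_mulVec]
      have happ : ‖toEuclideanCLM (𝕜 := ℂ) Q x‖ = en (Q *ᵥ v) := by
        rw [toCLM_apply]; rfl
      have hxv : ‖x‖ = en v := by
        simp [en, hv]
      rw [happ, hxv]
      have hQv : Q *ᵥ v = (a - S k) *ᵥ y := by
        rw [hQ, ← mulVec_mulVec, hy]
      rw [hQv, ← hyv]
      exact key_eq (hS k) (α k) y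
    have hQnorm : ‖Q‖₊ ≤ 1 := by
      have h : ‖Q‖ ≤ 1 := by
        rw [Matrix.cstar_norm_def]
        apply ContinuousLinearMap.opNorm_le_bound _ zero_le_one
        intro x
        rw [hQiso x, one_mul]
      have := coe_nnnorm Q
      rw [← NNReal.coe_le_coe]
      simpa [this]
    constructor
    · have hrw : spectralRadius ℂ ((a + S k)⁻¹ * (a - P k) * (a + P k)⁻¹ * (a - S k))
          = spectralRadius ℂ (T * Q) := by
        have e1 : (a + S k)⁻¹ * (a - P k) * (a + P k)⁻¹ * (a - S k)
            = (a + S k)⁻¹ * ((a - P k) * (a + P k)⁻¹ * (a - S k)) := by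
          simp only [mul_assoc]
        rw [e1, specRad_comm]
        congr 1
        rw [hT, hQ]
        simp only [mul_assoc]
      rw [hrw]
      calc spectralRadius ℂ (T * Q) ≤ (‖T * Q‖₊ : ENNReal) :=
            spectrum.spectralRadius_le_nnnorm _
        _ ≤ ((‖T‖₊ * ‖Q‖₊ : NNReal) : ENNReal) := by
            exact_mod_cast Matrix.l2_opNNNorm_mul T Q
        _ ≤ (‖T‖₊ : ENNReal) := by
            have : ‖T‖₊ * ‖Q‖₊ ≤ ‖T‖₊ := by
              calc ‖T‖₊ * ‖Q‖₊ ≤ ‖T‖₊ * 1 := mul_le_mul_right hQnorm _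
                _ = ‖T‖₊ := mul_one _
            exact_mod_cast this
    · exact hTnorm
end

section
/- Let M_1,…,M_m ∈ ℂ^{n×n} be nonsingular, A ∈ ℂ^{n×n} nonsingular, and β_1,…,β_m ≥ 0 with Σβ_k = 1. Then the Hermitian matrix S₂* + S₂ is positive semidefinite, where S₂ = Σ_{k≠j} β_k β_j A*(M_k^{-1})* A*A (M_k^{-1} - M_j^{-1}) A. -/
open Matrix
open scoped ComplexOrder

private lemma psd_add {n : ℕ} {A B : Matrix (Fin n) (Fin n) ℂ}
    (hA : A.PosSemidef) (hB : B.PosSemidef) : (A + B).PosSemidef := by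
  refine ⟨hA.1.add hB.1, fun x => ?_⟩
  simpa [Matrix.add_mulVec, dotProduct_add, mul_add, add_mul, Finsupp.sum_add] using add_nonneg (hA.2 x) (hB.2 x)

private lemma swap_sum {m : ℕ} {α : Type*} [AddCommMonoid α] (h : Fin m → Fin m → α) :
    ∑ k, ∑ j ∈ Finset.univ.erase k, h k j = ∑ k, ∑ j ∈ Finset.univ.erase k, h j k := by
  rw [Finset.sum_comm' (t' := Finset.univ) (s' := fun j => Finset.univ.erase j)]
  intro x y
  simp [Finset.mem_erase, eq_comm]

set_option maxHeartbeats 1000000 in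
theorem stmt19 {n m : ℕ} (A : Matrix (Fin n) (Fin n) ℂ) (hA : IsUnit A)
    (M : Fin m → Matrix (Fin n) (Fin n) ℂ) (hM : ∀ k, IsUnit (M k))
    (β : Fin m → ℝ) (hβ : ∀ k, 0 ≤ β k) (hsum : ∑ k, β k = 1) :
    (let S₂ : Matrix (Fin n) (Fin n) ℂ :=
      ∑ k, ∑ j ∈ Finset.univ.erase k,
        ((β k * β j : ℝ) : ℂ) •
          (Aᴴ * ((M k)⁻¹)ᴴ * Aᴴ * A * ((M k)⁻¹ - (M j)⁻¹) * A);
    (S₂ᴴ + S₂).PosSemidef) := by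
  set w : Fin m → Fin m → Matrix (Fin n) (Fin n) ℂ :=
    fun a b => Aᴴ * ((M a)⁻¹)ᴴ * Aᴴ * A * (M b)⁻¹ * A with hw
  set p : Fin m → Fin m → ℂ := fun a b => ((β a * β b : ℝ) : ℂ) with hp
  set D : Fin m → Fin m → Matrix (Fin n) (Fin n) ℂ :=
    fun k j => ((Real.sqrt (β k * β j) : ℝ) : ℂ) • (A * ((M k)⁻¹ - (M j)⁻¹) * A) with hD
  have hpsymm : ∀ k j, p k j = p j k := by intro k j; simp [hp, mul_comm]
  have hwT : ∀ a b, (w a b)ᴴ = w b a := by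
    intro a b
    simp [hw, Matrix.conjTranspose_mul, Matrix.mul_assoc]
  have hD2 : ∀ k j, (D k j)ᴴ * D k j = p k j • (w k k - w k j - w j k + w j j) := by
    intro k j
    have hs : ((Real.sqrt (β k * β j) : ℝ) : ℂ) * ((Real.sqrt (β k * β j) : ℝ) : ℂ) = p k j := by
      rw [← Complex.ofReal_mul, Real.mul_self_sqrt (mul_nonneg (hβ k) (hβ j))]
    simp only [hD, Matrix.conjTranspose_smul, Complex.star_def, Complex.conj_ofReal,
      Matrix.smul_mul, Matrix.mul_smul, smul_smul, hs]
    congr 1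
    simp only [hw, Matrix.conjTranspose_mul, Matrix.conjTranspose_sub,
      Matrix.conjTranspose_conjTranspose]
    noncomm_ring
  have key : (∑ k, ∑ j ∈ Finset.univ.erase k,
        ((β k * β j : ℝ) : ℂ) •
          (Aᴴ * ((M k)⁻¹)ᴴ * Aᴴ * A * ((M k)⁻¹ - (M j)⁻¹) * A))ᴴ
      + (∑ k, ∑ j ∈ Finset.univ.erase k,
        ((β k * β j : ℝ) : ℂ) •
          (Aᴴ * ((M k)⁻¹)ᴴ * Aᴴ * A * ((M k)⁻¹ - (M j)⁻¹) * A))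
      = ∑ k, ∑ j ∈ Finset.univ.erase k, (D k j)ᴴ * D k j := by
    have hterm : ∀ k j, ((β k * β j : ℝ) : ℂ) •
          (Aᴴ * ((M k)⁻¹)ᴴ * Aᴴ * A * ((M k)⁻¹ - (M j)⁻¹) * A)
        = p k j • (w k k - w k j) := by
      intro k j
      simp only [hp, hw]
      congr 1
      noncomm_ring
    simp only [hterm, hD2]
    have hT : (∑ k, ∑ j ∈ Finset.univ.erase k, p k j • (w k k - w k j))ᴴ
        = ∑ k, ∑ j ∈ Finset.univ.erase k, p k j • (w k k - w j k) := by
      simp only [Matrix.conjTranspose_sum, Matrix.conjTranspose_smul, Complex.star_def]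
      refine Finset.sum_congr rfl fun k _ => Finset.sum_congr rfl fun j _ => ?_
      simp [hp, Complex.conj_ofReal, Matrix.conjTranspose_sub, hwT]
    rw [hT]
    have hzero : ∑ k, ∑ j ∈ Finset.univ.erase k, (p k j • w j j - p k j • w k k) = 0 := by
      simp only [Finset.sum_sub_distrib]
      rw [sub_eq_zero, eq_comm, swap_sum (fun k j => p k j • w k k)]
      exact Finset.sum_congr rfl fun k _ => Finset.sum_congr rfl fun j _ => by rw [hpsymm]
    have expand : ∀ k j, p k j • (w k k - w k j - w j k + w j j)
        = (p k j • (w k k - w j k) + p k j • (w k k - w k j))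
          + (p k j • w j j - p k j • w k k) := by
      intro k j
      simp only [smul_sub, smul_add]
      abel
    rw [Finset.sum_congr rfl fun k _ => Finset.sum_congr rfl fun j _ => expand k j]
    simp only [Finset.sum_add_distrib]
    rw [hzero, add_zero]
  show ((∑ k, ∑ j ∈ Finset.univ.erase k,
        ((β k * β j : ℝ) : ℂ) •
          (Aᴴ * ((M k)⁻¹)ᴴ * Aᴴ * A * ((M k)⁻¹ - (M j)⁻¹) * A))ᴴ
      + ∑ k, ∑ j ∈ Finset.univ.erase k,
        ((β k * β j : ℝ) : ℂ) •
          (Aᴴ * ((M k)⁻¹)ᴴ * Aᴴ * A * ((M k)⁻¹ - (M j)⁻¹) * A)).PosSemidef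
  rw [key]
  exact Finset.sum_induction _ _ (fun _ _ ha hb => psd_add ha hb) Matrix.PosSemidef.zero
    fun k _ => Finset.sum_induction _ _ (fun _ _ ha hb => psd_add ha hb) Matrix.PosSemidef.zero
      fun j _ => Matrix.posSemidef_conjTranspose_mul_self _
end
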